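/- Let e and f be half-axes of A with f ≠ e, and write f = γe + u₁ + z with γ ∈ 𝔽, u₁ ∈ A_{1/2}(e), z ∈ A_0(e); write u₁² = δ₁e + z₁ with δ₁ ∈ 𝔽 and z₁ ∈ A_0(e). Then: (1) z² = (1 − γ)z; (2) z₁ = γz; (3) if γ ≠ 0 then u₁ ≠ 0 and z = γ⁻¹u₁² − γ⁻¹δ₁e; (4) if γ = 0 then f = u₁ + z with u₁² = 0 and zu₁ = (1/2)u₁, so in particular u₁ ∈ A_{1/2}(f). -/

import Mathlib

/-- `A_λ(e)`-based definition of a half-axis in a commutative non-associative `F`-algebra `A`: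
`e` is idempotent, `A_1(e) = F e`, `A = F e ⊕ A_{1/2}(e) ⊕ A_0(e)`, and the fusion rules
`Z Z ⊆ Z`, `U U ⊆ F e + Z`, `U Z ⊆ U` hold, where `U = A_{1/2}(e)` and `Z = A_0(e)`. -/
structure IsHalfAxis (F : Type*) [Field F] {A : Type*} [NonUnitalNonAssocCommRing A]
    [Module F A] [SMulCommClass F A A] [IsScalarTower F A A] (e : A) : Prop where
  idem : e * e = e
  eig_one : {y : A | e * y = y} = {y : A | ∃ c : F, y = c • e}
  decomp : ∀ x : A, ∃ (c : F) (u z : A),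
      e * u = (2⁻¹ : F) • u ∧ e * z = 0 ∧ x = c • e + u + z
  indep : ∀ (c : F) (u z : A), e * u = (2⁻¹ : F) • u → e * z = 0 →
      c • e + u + z = 0 → c = 0 ∧ u = 0 ∧ z = 0
  fusionZZ : ∀ z z' : A, e * z = 0 → e * z' = 0 → e * (z * z') = 0
  fusionUU : ∀ u u' : A, e * u = (2⁻¹ : F) • u → e * u' = (2⁻¹ : F) • u' →
      ∃ (c : F) (z : A), e * z = 0 ∧ u * u' = c • e + z
  fusionUZ : ∀ u z : A, e * u = (2⁻¹ : F) • u → e * z = 0 →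
      e * (u * z) = (2⁻¹ : F) • (u * z)

theorem stmt13 {F : Type*} [Field F] {A : Type*} [NonUnitalNonAssocCommRing A]
    [Module F A] [SMulCommClass F A A] [IsScalarTower F A A]
    (h2 : (2 : F) ≠ 0)
    (e f : A) (he : IsHalfAxis F e) (hf : IsHalfAxis F f) (hne : f ≠ e)
    (γ δ₁ : F) (u₁ z z₁ : A)
    (hu₁ : e * u₁ = (2⁻¹ : F) • u₁) (hz : e * z = 0) (hz₁ : e * z₁ = 0)
    (hfdec : f = γ • e + u₁ + z) (hdec1 : u₁ * u₁ = δ₁ • e + z₁) :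
    (z * z = (1 - γ) • z) ∧
    (z₁ = γ • z) ∧
    (γ ≠ 0 → u₁ ≠ 0 ∧ z = γ⁻¹ • (u₁ * u₁) - (γ⁻¹ * δ₁) • e) ∧
    (γ = 0 → f = u₁ + z ∧ u₁ * u₁ = 0 ∧ z * u₁ = (2⁻¹ : F) • u₁ ∧
      f * u₁ = (2⁻¹ : F) • u₁) := by
  have h4 : (4:F) ≠ 0 := by rw [show (4:F) = 2*2 by norm_num]; exact mul_ne_zero h2 h2
  have h8 : (8:F) ≠ 0 := by rw [show (8:F) = 2*4 by norm_num]; exact mul_ne_zero h2 h4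
  have h16 : (16:F) ≠ 0 := by rw [show (16:F) = 2*8 by norm_num]; exact mul_ne_zero h2 h8
  have h32 : (32:F) ≠ 0 := by rw [show (32:F) = 2*16 by norm_num]; exact mul_ne_zero h2 h16
  have h64 : (64:F) ≠ 0 := by rw [show (64:F) = 2*32 by norm_num]; exact mul_ne_zero h2 h32
  have hue : u₁ * e = (2⁻¹ : F) • u₁ := by rw [mul_comm]; exact hu₁
  have hze : z * e = 0 := by rw [mul_comm]; exact hz
  have huzU : e * (u₁ * z) = (2⁻¹ : F) • (u₁ * z) := he.fusionUZ _ _ hu₁ hz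
  have hzzZ : e * (z * z) = 0 := he.fusionZZ _ _ hz hz
  -- Step 1: expand f * f = f
  have hff : f * f = (γ*γ+δ₁) • e + (γ • u₁ + (2:F) • (u₁*z)) + (z₁ + z*z) := by
    rw [hfdec]
    simp only [add_mul, mul_add, smul_mul_assoc, mul_smul_comm, he.idem, hu₁, hz, hue, hze,
      hdec1, mul_comm z u₁, smul_smul, smul_zero, add_zero, zero_add, smul_add]
    match_scalars <;> field_simp <;> ring
  have key0 : (γ*γ+δ₁) • e + (γ • u₁ + (2:F) • (u₁*z)) + (z₁ + z*z) = γ • e + u₁ + z := by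
    rw [← hff, hf.idem, hfdec]
  have key1 : ((γ*γ+δ₁)-γ) • e + ((γ-1) • u₁ + (2:F) • (u₁*z)) + ((z₁ + z*z) - z) = 0 := by
    have h : ((γ*γ+δ₁)-γ) • e + ((γ-1) • u₁ + (2:F) • (u₁*z)) + ((z₁ + z*z) - z)
        = ((γ*γ+δ₁) • e + (γ • u₁ + (2:F) • (u₁*z)) + (z₁ + z*z)) - (γ • e + u₁ + z) := by
      module
    rw [h, key0, sub_self]
  obtain ⟨hE1, hE2, hE3⟩ := he.indep _ _ _
    (by simp only [mul_add, mul_smul_comm, hu₁, huzU, smul_smul, smul_add]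
        match_scalars <;> ring)
    (by simp only [mul_sub, mul_add, hz₁, hzzZ, hz, add_zero, sub_self])
    key1
  have hδ : δ₁ = γ - γ*γ := by linear_combination hE1
  have hu₁z : u₁ * z = ((1-γ)*2⁻¹) • u₁ := by
    have h' : (2:F) • (u₁*z) = (1-γ) • u₁ := by
      rw [← sub_eq_zero]
      have h : (2:F) • (u₁*z) - (1-γ) • u₁ = (γ-1) • u₁ + (2:F) • (u₁*z) := by module
      rw [h, hE2]
    calc u₁ * z = (2⁻¹*2 : F) • (u₁*z) := by rw [inv_mul_cancel₀ h2, one_smul]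
      _ = (2⁻¹:F) • ((2:F) • (u₁*z)) := by rw [mul_smul]
      _ = ((1-γ)*2⁻¹) • u₁ := by rw [h', smul_smul]; ring_nf
  have hz2 : z * z = z - z₁ := by
    rw [← sub_eq_zero]
    have h : z*z - (z - z₁) = (z₁ + z*z) - z := by module
    rw [h, hE3]
  -- Step 2: cubic identity for f
  have cubic : ∀ x : A, f*(f*(f*x)) = ((3:F)*2⁻¹) • (f*(f*x)) - (2⁻¹:F) • (f*x) := by
    intro x
    obtain ⟨c, u, w, hu, hw, hx⟩ := hf.decomp x
    subst hx
    have h1 : f*(c • f + u + w) = c • f + (2⁻¹:F) • u := by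
      rw [mul_add, mul_add, mul_smul_comm, hf.idem, hu, hw, add_zero]
    rw [h1]
    have h2' : f*(c • f + (2⁻¹:F) • u) = c • f + ((2⁻¹:F)*2⁻¹) • u := by
      rw [mul_add, mul_smul_comm, hf.idem, mul_smul_comm, hu, smul_smul]
    rw [h2']
    have h3 : f*(c • f + ((2⁻¹:F)*2⁻¹) • u) = c • f + ((2⁻¹*2⁻¹*(2⁻¹:F))) • u := by
      rw [mul_add, mul_smul_comm, hf.idem, mul_smul_comm, hu, smul_smul]
    rw [h3]
    match_scalars <;> field_simp <;> ring
  -- Step 3: products with f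
  have hfe : f * e = γ • e + (2⁻¹:F) • u₁ := by
    rw [hfdec, add_mul, add_mul, smul_mul_assoc, he.idem, hue, hze, add_zero]
  have hfu : f * u₁ = δ₁ • e + (2⁻¹:F) • u₁ + z₁ := by
    rw [hfdec, add_mul, add_mul, smul_mul_assoc, hu₁, hdec1, mul_comm z u₁, hu₁z]
    match_scalars <;> ring
  have hfz₁ : f * z₁ = u₁ * z₁ + z * z₁ := by
    rw [hfdec, add_mul, add_mul, smul_mul_assoc, hz₁, smul_zero, zero_add]
  have hpU : e * (u₁ * z₁) = (2⁻¹:F) • (u₁ * z₁) := he.fusionUZ _ _ hu₁ hz₁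
  have hqZ : e * (z * z₁) = 0 := he.fusionZZ _ _ hz hz₁
  have hffe : f*(f*e) = (γ*γ + 2⁻¹*δ₁) • e + ((γ*2⁻¹ + 2⁻¹*2⁻¹)) • u₁ + (2⁻¹:F) • z₁ := by
    rw [hfe, mul_add, mul_smul_comm, mul_smul_comm, hfe, hfu]
    match_scalars <;> ring
  have hfffe : f*(f*(f*e)) =
      ((γ*γ+2⁻¹*δ₁)*γ + (γ*2⁻¹+2⁻¹*2⁻¹)*δ₁) • e
      + (((γ*γ+2⁻¹*δ₁)*2⁻¹ + (γ*2⁻¹+2⁻¹*2⁻¹)*2⁻¹) • u₁ + (2⁻¹:F) • (u₁*z₁))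
      + (((γ*2⁻¹+2⁻¹*2⁻¹):F) • z₁ + (2⁻¹:F) • (z*z₁)) := by
    rw [hffe, mul_add, mul_add, mul_smul_comm, mul_smul_comm, mul_smul_comm, hfe, hfu, hfz₁]
    match_scalars <;> ring
  have hce := cubic e
  rw [hfffe, hffe, hfe] at hce
  have key2 : (((γ*γ+2⁻¹*δ₁)*γ + (γ*2⁻¹+2⁻¹*2⁻¹)*δ₁) - ((3:F)*2⁻¹*(γ*γ+2⁻¹*δ₁) - 2⁻¹*γ)) • e
      + ((((γ*γ+2⁻¹*δ₁)*2⁻¹ + (γ*2⁻¹+2⁻¹*2⁻¹)*2⁻¹) - ((3:F)*2⁻¹*(γ*2⁻¹+2⁻¹*2⁻¹) - 2⁻¹*2⁻¹)) • u₁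
          + (2⁻¹:F) • (u₁*z₁))
      + ((((γ*2⁻¹+2⁻¹*2⁻¹) - (3:F)*2⁻¹*2⁻¹ : F)) • z₁ + (2⁻¹:F) • (z*z₁)) = 0 := by
    rw [← sub_eq_zero] at hce
    rw [← hce]
    module
  obtain ⟨hK1, hK2, hK3⟩ := he.indep _ _ _
    (by simp only [mul_add, mul_smul_comm, hu₁, hpU, smul_smul, smul_add]
        match_scalars <;> ring)
    (by simp only [mul_add, mul_smul_comm, hz₁, hqZ, smul_zero, add_zero])
    key2
  -- extract u₁*z₁ and z*z₁
  have hp : u₁ * z₁ = ((γ - γ*γ)*2⁻¹) • u₁ := by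
    have h' : (2⁻¹:F) • (u₁*z₁) = (((3:F)*2⁻¹*(γ*2⁻¹+2⁻¹*2⁻¹) - 2⁻¹*2⁻¹) - ((γ*γ+2⁻¹*δ₁)*2⁻¹ + (γ*2⁻¹+2⁻¹*2⁻¹)*2⁻¹)) • u₁ := by
      rw [← sub_eq_zero]
      have h : (2⁻¹:F) • (u₁*z₁) - (((3:F)*2⁻¹*(γ*2⁻¹+2⁻¹*2⁻¹) - 2⁻¹*2⁻¹) - ((γ*γ+2⁻¹*δ₁)*2⁻¹ + (γ*2⁻¹+2⁻¹*2⁻¹)*2⁻¹)) • u₁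
          = (((γ*γ+2⁻¹*δ₁)*2⁻¹ + (γ*2⁻¹+2⁻¹*2⁻¹)*2⁻¹) - ((3:F)*2⁻¹*(γ*2⁻¹+2⁻¹*2⁻¹) - 2⁻¹*2⁻¹)) • u₁
          + (2⁻¹:F) • (u₁*z₁) := by module
      rw [h, hK2]
    calc u₁ * z₁ = ((2:F)*2⁻¹) • (u₁*z₁) := by
          rw [mul_inv_cancel₀ h2, one_smul]
      _ = (2:F) • ((2⁻¹:F) • (u₁*z₁)) := by rw [mul_smul]
      _ = ((γ - γ*γ)*2⁻¹) • u₁ := by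
          rw [h', smul_smul, hδ]
          match_scalars
          have i2 : (2:F)*2⁻¹ = 1 := mul_inv_cancel₀ h2
          linear_combination ((2:F)*2⁻¹*2⁻¹ + (γ*γ+γ)*2⁻¹) * i2
  have hq : z * z₁ = (1-γ) • z₁ := by
    have h' : (2⁻¹:F) • (z*z₁) = ((3:F)*2⁻¹*2⁻¹ - (γ*2⁻¹+2⁻¹*2⁻¹)) • z₁ := by
      rw [← sub_eq_zero]
      have h : (2⁻¹:F) • (z*z₁) - ((3:F)*2⁻¹*2⁻¹ - (γ*2⁻¹+2⁻¹*2⁻¹)) • z₁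
          = (((γ*2⁻¹+2⁻¹*2⁻¹) - (3:F)*2⁻¹*2⁻¹ : F)) • z₁ + (2⁻¹:F) • (z*z₁) := by module
      rw [h, hK3]
    calc z * z₁ = ((2:F)*2⁻¹) • (z*z₁) := by rw [mul_inv_cancel₀ h2, one_smul]
      _ = (2:F) • ((2⁻¹:F) • (z*z₁)) := by rw [mul_smul]
      _ = (1-γ) • z₁ := by
          rw [h', smul_smul]
          match_scalars
          field_simp
          ring
  -- Step 4: z₁ - γ • z is a 1-eigenvector of f
  have hy : f * (z₁ - γ • z) = z₁ - γ • z := by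
    rw [hfdec]
    simp only [add_mul, mul_sub, mul_add, smul_mul_assoc, mul_smul_comm, hz₁, hz, hp, hq,
      hu₁z, hz2, smul_zero, smul_sub, smul_smul, zero_sub, sub_zero, smul_add]
    match_scalars <;> ring
  have hmem : (z₁ - γ • z) ∈ {y : A | ∃ c : F, y = c • f} := by
    rw [← hf.eig_one]; exact hy
  obtain ⟨c, hc⟩ := hmem
  rw [hfdec] at hc
  have key3 : (c*γ) • e + c • u₁ + (c • z - (z₁ - γ • z)) = 0 := by
    have h : (c*γ) • e + c • u₁ + (c • z - (z₁ - γ • z))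
        = c • (γ • e + u₁ + z) - (z₁ - γ • z) := by module
    rw [h, ← hc, sub_self]
  obtain ⟨hc1, hc2, hc3⟩ := he.indep _ _ _
    (by rw [mul_smul_comm, hu₁, smul_comm])
    (by simp only [mul_sub, mul_smul_comm, hz, hz₁, smul_zero, sub_zero, sub_self, zero_sub,
        neg_zero])
    key3
  -- z₁ = γ • z
  have hz₁γ : z₁ = γ • z := by
    by_cases hcc : c = 0
    · rw [hcc, zero_smul, zero_sub, neg_eq_zero, sub_eq_zero] at hc3
      exact hc3
    · have hγ0 : γ = 0 := by
        rcases mul_eq_zero.mp hc1 with h | h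
        · exact absurd h hcc
        · exact h
      have hu0 : u₁ = 0 := by
        rcases smul_eq_zero.mp hc2 with h | h
        · exact absurd h hcc
        · exact h
      have h0 : δ₁ • e + 0 + z₁ = 0 := by
        rw [add_zero, ← hdec1, hu0, mul_zero]
      obtain ⟨-, -, hz₁0⟩ := he.indep δ₁ 0 z₁ (by simp) hz₁ h0
      rw [hz₁0, hγ0, zero_smul]
  refine ⟨?_, hz₁γ, ?_, ?_⟩
  · rw [hz2, hz₁γ]; module
  · intro hγ
    constructor
    · intro hu0
      have h0 : δ₁ • e + 0 + z₁ = 0 := by rw [add_zero, ← hdec1, hu0, mul_zero]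
      obtain ⟨hδ0, -, hz₁0⟩ := he.indep δ₁ 0 z₁ (by simp) hz₁ h0
      have hγ1 : γ = 1 := by
        have : γ * (1 - γ) = 0 := by rw [hδ] at hδ0; linear_combination hδ0
        rcases mul_eq_zero.mp this with h | h
        · exact absurd h hγ
        · linear_combination -h
      have hz0 : z = 0 := by
        have := hz₁γ
        rw [hz₁0, hγ1, one_smul] at this
        exact this.symm
      apply hne
      rw [hfdec, hu0, hz0, hγ1, one_smul, add_zero, add_zero]
    · rw [hdec1, hz₁γ]
      match_scalars <;> field_simp <;> ring
  · intro hγ0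
    refine ⟨by rw [hfdec, hγ0, zero_smul, zero_add], ?_, ?_, ?_⟩
    · rw [hdec1, hz₁γ, hδ, hγ0]
      simp
    · rw [mul_comm, hu₁z, hγ0]
      norm_num
    · rw [hfu, hz₁γ, hδ, hγ0]
      simp
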